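/- Let G be a finite graph with vertex set V, and let c > 0 be such that for every vertex v ∈ V and every integer k ≥ 1, the number of connected subsets of V of cardinality k containing v is at most e^{ck}. For every ε > 0 there exists η > 0 (depending only on ε and c) with the following property: whenever w : 𝖯(G) → ℂ is an activity function on the polymers of G satisfying |w(γ)| ≤ η·e^{−(2+c)|γ|} for every polymer γ, then Ξ(w) ≠ 0 and for every independent family {γ̄} of polymers, e^{−ε|Tr({γ̄})|} ≤ |Ξ(w^{{γ̄}}) / Ξ(w)| ≤ e^{ε|Tr({γ̄})|}. -/

import Mathlib

open Finset
open scoped Classical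

variable {V : Type}

/-- A polymer: a nonempty subset of vertices inducing a connected subgraph. -/
def IsPolymer (G : SimpleGraph V) (γ : Finset V) : Prop :=
  γ.Nonempty ∧ (G.induce (↑γ : Set V)).Connected

/-- An independent family of polymers: a finite set of polymers such that the union of
any two distinct members does not induce a connected subgraph. -/
def IsIndepFamily [DecidableEq V] (G : SimpleGraph V) (Γ : Finset (Finset V)) : Prop :=
  (∀ γ ∈ Γ, IsPolymer G γ) ∧
    ∀ γ ∈ Γ, ∀ γ' ∈ Γ, γ ≠ γ' → ¬ (G.induce (↑(γ ∪ γ') : Set V)).Connected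

/-- The trace of a family of polymers: the union of its members. -/
def traceFam [DecidableEq V] (Γ : Finset (Finset V)) : Finset V := Γ.sup id

/-- The polymer partition function `Ξ(w)` with activities `w` (the empty family
contributes `1`). -/
noncomputable def Xi [Fintype V] [DecidableEq V] (G : SimpleGraph V)
    (w : Finset V → ℂ) : ℂ :=
  ∑ Γ : Finset (Finset V), if IsIndepFamily G Γ then ∏ γ ∈ Γ, w γ else 0

section Graph
variable (G : SimpleGraph V)

lemma walk_stay {s t : Set V} (hadj : ∀ x ∈ s, ∀ y ∈ t, ¬G.Adj x y) :
    ∀ {a b : ↥(s ∪ t)} (_ : (G.induce (s ∪ t)).Walk a b), (a : V) ∈ s → (b : V) ∈ s := by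
  intro a b p
  induction p with
  | nil => exact fun h => h
  | @cons a' c' b' h p ih =>
      intro hu
      apply ih
      rcases c'.2 with hcs | hct
      · exact hcs
      · exact absurd (SimpleGraph.comap_adj.1 h) (hadj _ hu _ hct)

lemma not_connected_of_sep_set {s t : Set V} (hs : s.Nonempty) (ht : t.Nonempty)
    (hdisj : ∀ x ∈ s, x ∉ t) (hadj : ∀ x ∈ s, ∀ y ∈ t, ¬G.Adj x y) :
    ¬ (G.induce (s ∪ t)).Connected := by
  intro hconn
  obtain ⟨x, hx⟩ := hs
  obtain ⟨y, hy⟩ := ht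
  obtain ⟨p⟩ := hconn.preconnected ⟨x, Or.inl hx⟩ ⟨y, Or.inr hy⟩
  exact hdisj y (walk_stay G hadj p hx) hy

variable [Fintype V] [DecidableEq V]

/-- neighbors of a vertex -/
noncomputable def nbr (x : V) : Finset V := univ.filter (fun u => G.Adj x u)

/-- closed neighborhood of a polymer -/
noncomputable def closedNbhd (γ : Finset V) : Finset V := γ.biUnion (fun x => insert x (nbr G x))

lemma mem_closedNbhd {γ : Finset V} {u : V} :
    u ∈ closedNbhd G γ ↔ ∃ x ∈ γ, u = x ∨ G.Adj x u := by
  simp [closedNbhd, nbr]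

lemma subset_closedNbhd (γ : Finset V) : γ ⊆ closedNbhd G γ := by
  intro x hx; exact (mem_closedNbhd G).2 ⟨x, hx, Or.inl rfl⟩

lemma indep_unique_mem {Γ : Finset (Finset V)} (h : IsIndepFamily G Γ) {γ γ' : Finset V}
    (hγ : γ ∈ Γ) (hγ' : γ' ∈ Γ) {v : V} (hv : v ∈ γ) (hv' : v ∈ γ') : γ = γ' := by
  by_contra hne
  apply h.2 γ hγ γ' hγ' hne
  rw [coe_union]
  exact SimpleGraph.induce_union_connected (h.1 γ hγ).2.preconnected (h.1 γ' hγ').2.preconnected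
    ⟨v, by simp [hv, hv']⟩

lemma not_connected_union_of_disj_nbhd {γ γ' : Finset V} (hp : IsPolymer G γ)
    (hp' : IsPolymer G γ') (h : ∀ x ∈ γ', x ∉ closedNbhd G γ) :
    ¬ (G.induce (↑(γ ∪ γ') : Set V)).Connected := by
  rw [coe_union]
  apply not_connected_of_sep_set G (Finset.coe_nonempty.2 hp.1)
    (Finset.coe_nonempty.2 hp'.1)
  · intro x hx hx'
    exact h x hx' ((mem_closedNbhd G).2 ⟨x, hx, Or.inl rfl⟩)
  · intro x hx y hy hxy
    exact h y hy ((mem_closedNbhd G).2 ⟨x, hx, Or.inr hxy⟩)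

lemma disj_nbhd_of_not_connected {γ γ' : Finset V} (hp : IsPolymer G γ) (hp' : IsPolymer G γ')
    (h : ¬ (G.induce (↑(γ ∪ γ') : Set V)).Connected) : ∀ x ∈ γ', x ∉ closedNbhd G γ := by
  intro x hx hxN
  apply h
  rw [coe_union]
  rcases (mem_closedNbhd G).1 hxN with ⟨y, hy, hcase⟩
  rcases hcase with rfl | hadj
  · exact SimpleGraph.induce_union_connected hp.2.preconnected hp'.2.preconnected ⟨x, by simp [hy, hx]⟩
  · exact SimpleGraph.connected_induce_union hp.2.preconnected hp'.2.preconnected (by simpa using hy) (by simpa using hx) hadj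

lemma indep_mono {Γ Γ' : Finset (Finset V)} (hsub : Γ' ⊆ Γ) (h : IsIndepFamily G Γ) :
    IsIndepFamily G Γ' :=
  ⟨fun γ hγ => h.1 γ (hsub hγ), fun γ hγ γ' hγ' => h.2 γ (hsub hγ) γ' (hsub hγ')⟩

end Graph

section XiPart
variable [Fintype V] [DecidableEq V] (G : SimpleGraph V) (w : Finset V → ℂ)

noncomputable def polymersIn (S : Finset V) : Finset (Finset V) :=
  S.powerset.filter (fun γ => IsPolymer G γ)

noncomputable def famsOn (S : Finset V) : Finset (Finset (Finset V)) :=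
  univ.filter (fun Γ => IsIndepFamily G Γ ∧ ∀ γ ∈ Γ, γ ⊆ S)

noncomputable def XiOn (S : Finset V) : ℂ := ∑ Γ ∈ famsOn G S, ∏ γ ∈ Γ, w γ

lemma mem_famsOn {S : Finset V} {Γ : Finset (Finset V)} :
    Γ ∈ famsOn G S ↔ IsIndepFamily G Γ ∧ ∀ γ ∈ Γ, γ ⊆ S := by
  simp [famsOn]

lemma famsOn_empty : famsOn G ∅ = {∅} := by
  ext Γ
  simp only [mem_famsOn, mem_singleton]
  constructor
  · rintro ⟨h1, h2⟩
    by_contra hne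
    obtain ⟨γ, hγ⟩ := Finset.nonempty_iff_ne_empty.2 hne
    obtain ⟨x, hx⟩ := (h1.1 γ hγ).1
    exact absurd (h2 γ hγ hx) (notMem_empty x)
  · rintro rfl
    exact ⟨⟨fun γ h => absurd h (notMem_empty γ), fun γ h => absurd h (notMem_empty γ)⟩,
      fun γ h => absurd h (notMem_empty γ)⟩

lemma XiOn_empty : XiOn G w ∅ = 1 := by
  rw [XiOn, famsOn_empty]
  simp

lemma Xi_eq_XiOn_univ : Xi G w = XiOn G w univ := by
  rw [Xi, XiOn, famsOn, Finset.sum_filter]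
  apply Finset.sum_congr rfl
  intro Γ _
  by_cases h : IsIndepFamily G Γ
  · simp [h, fun γ (_ : γ ∈ Γ) => Finset.subset_univ γ]
  · simp [h]

lemma Xi_trunc_eq_XiOn (T : Finset V) :
    Xi G (fun γ => if γ ∩ T = ∅ then w γ else 0) = XiOn G w (univ \ T) := by
  rw [Xi, XiOn, famsOn, Finset.sum_filter]
  apply Finset.sum_congr rfl
  intro Γ _
  by_cases h : IsIndepFamily G Γ
  · by_cases h2 : ∀ γ ∈ Γ, γ ⊆ univ \ T
    · rw [if_pos h, if_pos ⟨h, h2⟩]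
      apply Finset.prod_congr rfl
      intro γ hγ
      have : γ ∩ T = ∅ := by
        rw [Finset.eq_empty_iff_forall_notMem]
        intro x hx
        rw [Finset.mem_inter] at hx
        exact (Finset.mem_sdiff.1 (h2 γ hγ hx.1)).2 hx.2
      rw [if_pos this]
    · rw [if_pos h, if_neg (by simp [h, h2])]
      push_neg at h2
      obtain ⟨γ, hγ, hns⟩ := h2
      apply Finset.prod_eq_zero hγ
      rw [if_neg]
      intro hemp
      apply hns
      intro x hx
      rw [Finset.mem_sdiff]
      refine ⟨Finset.mem_univ x, fun hxT => ?_⟩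
      rw [Finset.eq_empty_iff_forall_notMem] at hemp
      exact hemp x (Finset.mem_inter.2 ⟨hx, hxT⟩)
  · rw [if_neg h, if_neg (by simp [h])]

/-- Key decomposition: peeling off the polymer containing `v`. -/
lemma XiOn_decomp {S : Finset V} {v : V} (hv : v ∈ S) :
    XiOn G w S = XiOn G w (S.erase v) +
      ∑ γ ∈ (polymersIn G S).filter (fun γ => v ∈ γ),
        w γ * XiOn G w (S \ closedNbhd G γ) := by
  classical
  have hsplit := Finset.sum_filter_add_sum_filter_not (famsOn G S)
    (fun Γ => ∀ γ ∈ Γ, v ∉ γ) (fun Γ => ∏ γ ∈ Γ, w γ)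
  rw [XiOn, ← hsplit]
  congr 1
  · -- families avoiding v
    apply Finset.sum_congr _ (fun _ _ => rfl)
    ext Γ
    simp only [Finset.mem_filter, mem_famsOn]
    constructor
    · rintro ⟨⟨h1, h2⟩, h3⟩
      exact ⟨h1, fun γ hγ => Finset.subset_erase.2 ⟨h2 γ hγ, h3 γ hγ⟩⟩
    · rintro ⟨h1, h2⟩
      exact ⟨⟨h1, fun γ hγ => (Finset.subset_erase.1 (h2 γ hγ)).1⟩,
        fun γ hγ => (Finset.subset_erase.1 (h2 γ hγ)).2⟩
  · -- families containing a polymer through v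
    have step1 : ∑ Γ ∈ (famsOn G S).filter (fun Γ => ¬ ∀ γ ∈ Γ, v ∉ γ), ∏ γ ∈ Γ, w γ =
        ∑ Γ ∈ (famsOn G S).filter (fun Γ => ¬ ∀ γ ∈ Γ, v ∉ γ),
          ∑ γ₀ ∈ Γ.filter (fun γ => v ∈ γ), w γ₀ * ∏ γ ∈ Γ.erase γ₀, w γ := by
      apply Finset.sum_congr rfl
      intro Γ hΓ
      rw [Finset.mem_filter] at hΓ
      push_neg at hΓ
      obtain ⟨hΓf, γc, hγc, hvγc⟩ := hΓ
      have hindep := ((mem_famsOn G).1 hΓf).1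
      have hfil : Γ.filter (fun γ => v ∈ γ) = {γc} := by
        rw [Finset.eq_singleton_iff_unique_mem]
        refine ⟨Finset.mem_filter.2 ⟨hγc, hvγc⟩, fun γ hγ => ?_⟩
        rw [Finset.mem_filter] at hγ
        exact indep_unique_mem G hindep hγ.1 hγc hγ.2 hvγc
      rw [hfil, Finset.sum_singleton, Finset.mul_prod_erase _ _ hγc]
    rw [step1]
    rw [Finset.sum_sigma']
    have step2 : ∑ γ ∈ (polymersIn G S).filter (fun γ => v ∈ γ),
        w γ * XiOn G w (S \ closedNbhd G γ) =
        ∑ x ∈ ((polymersIn G S).filter (fun γ => v ∈ γ)).sigma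
          (fun γ => famsOn G (S \ closedNbhd G γ)),
          w x.1 * ∏ γ ∈ x.2, w γ := by
      rw [Finset.sum_sigma]
      apply Finset.sum_congr rfl
      intro γ _
      rw [XiOn, Finset.mul_sum]
    rw [step2]
    apply Finset.sum_nbij' (i := fun x => (⟨x.2, x.1.erase x.2⟩ :
        (_ : Finset V) × Finset (Finset V)))
      (j := fun y => (⟨insert y.1 y.2, y.1⟩ : (_ : Finset (Finset V)) × Finset V))
    · -- i maps into target
      rintro ⟨Γ, γ⟩ hx
      simp only [Finset.mem_sigma, Finset.mem_filter, mem_famsOn] at hx ⊢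
      obtain ⟨⟨⟨hindep, hsub⟩, _⟩, hγΓ, hvγ⟩ := hx
      refine ⟨⟨?_, hvγ⟩, ?_, ?_⟩
      · rw [polymersIn, Finset.mem_filter, Finset.mem_powerset]
        exact ⟨hsub γ hγΓ, hindep.1 γ hγΓ⟩
      · exact indep_mono G (Finset.erase_subset _ _) hindep
      · intro γ' hγ'
        rw [Finset.mem_erase] at hγ'
        intro x hx
        rw [Finset.mem_sdiff]
        refine ⟨hsub γ' hγ'.2 hx, ?_⟩
        exact disj_nbhd_of_not_connected G (hindep.1 γ hγΓ) (hindep.1 γ' hγ'.2)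
          (hindep.2 γ hγΓ γ' hγ'.2 (Ne.symm hγ'.1)) x hx
    · -- j maps into source
      rintro ⟨γ, Γ'⟩ hy
      simp only [Finset.mem_sigma, Finset.mem_filter, mem_famsOn] at hy ⊢
      obtain ⟨⟨hpoly, hvγ⟩, hindep', hsub'⟩ := hy
      rw [polymersIn, Finset.mem_filter, Finset.mem_powerset] at hpoly
      have hdisjN : ∀ γ' ∈ Γ', ∀ x ∈ γ', x ∉ closedNbhd G γ := by
        intro γ' hγ' x hx
        exact fun hN => (Finset.mem_sdiff.1 (hsub' γ' hγ' hx)).2 hN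
      have hne : ∀ γ' ∈ Γ', γ ≠ γ' := by
        intro γ' hγ' heq
        obtain ⟨x, hx⟩ := hpoly.2.1
        exact hdisjN γ' hγ' x (heq ▸ hx) (subset_closedNbhd G γ (heq ▸ hx))
      refine ⟨⟨⟨⟨?_, ?_⟩, ?_⟩, ?_⟩, ?_, hvγ⟩
      · intro γ' hγ'
        rcases Finset.mem_insert.1 hγ' with rfl | h
        · exact hpoly.2
        · exact hindep'.1 γ' h
      · intro γ1 hγ1 γ2 hγ2 hne12
        rcases Finset.mem_insert.1 hγ1 with rfl | h1 <;>
          rcases Finset.mem_insert.1 hγ2 with rfl | h2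
        · exact absurd rfl hne12
        · exact not_connected_union_of_disj_nbhd G hpoly.2 (hindep'.1 γ2 h2) (hdisjN γ2 h2)
        · rw [Finset.union_comm]
          exact not_connected_union_of_disj_nbhd G hpoly.2 (hindep'.1 γ1 h1) (hdisjN γ1 h1)
        · exact hindep'.2 γ1 h1 γ2 h2 hne12
      · intro γ' hγ'
        rcases Finset.mem_insert.1 hγ' with rfl | h
        · exact hpoly.1
        · exact fun x hx => (Finset.mem_sdiff.1 (hsub' γ' h hx)).1
      · push_neg
        exact ⟨γ, Finset.mem_insert_self _ _, hvγ⟩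
      · exact Finset.mem_insert_self _ _
    · -- left inverse
      rintro ⟨Γ, γ⟩ hx
      simp only [Finset.mem_sigma, Finset.mem_filter] at hx
      simp [Finset.insert_erase hx.2.1]
    · -- right inverse
      rintro ⟨γ, Γ'⟩ hy
      simp only [Finset.mem_sigma, Finset.mem_filter, mem_famsOn] at hy
      obtain ⟨⟨hpoly, _⟩, _, hsub'⟩ := hy
      rw [polymersIn, Finset.mem_filter, Finset.mem_powerset] at hpoly
      have hγnot : γ ∉ Γ' := by
        intro hmem
        obtain ⟨x, hx⟩ := hpoly.2.1
        exact (Finset.mem_sdiff.1 (hsub' γ hmem hx)).2 (subset_closedNbhd G γ hx)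
      simp [Finset.erase_insert hγnot]
    · -- values agree
      rintro ⟨Γ, γ⟩ hx
      rfl

end XiPart

section Analytic

/-- The internal small parameter. -/
noncomputable def eps0 (c ε : ℝ) : ℝ := min ε (1 / (1 + Real.exp (c * 2)))

/-- The activity threshold. -/
noncomputable def eta (c ε : ℝ) : ℝ := (1 - Real.exp (-(eps0 c ε))) / 2

variable {c ε : ℝ}

lemma eps0_pos (hc : 0 < c) (hε : 0 < ε) : 0 < eps0 c ε := by
  apply lt_min hε
  positivity

lemma eps0_le_eps : eps0 c ε ≤ ε := min_le_left _ _

lemma eps0_mul_le (hc : 0 < c) (hε : 0 < ε) : eps0 c ε * (1 + Real.exp (c * 2)) ≤ 1 := by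
  have h1 : (0:ℝ) < 1 + Real.exp (c * 2) := by positivity
  have h2 : eps0 c ε ≤ 1 / (1 + Real.exp (c * 2)) := min_le_right _ _
  rw [← le_div_iff₀ h1] at *
  exact h2

lemma eta_pos (hc : 0 < c) (hε : 0 < ε) : 0 < eta c ε := by
  have h : Real.exp (-(eps0 c ε)) < 1 := by
    rw [Real.exp_lt_one_iff]
    simpa using eps0_pos hc hε
  unfold eta; linarith

lemma eta_lt_one (hc : 0 < c) (hε : 0 < ε) : eta c ε < 1 := by
  have h : 0 < Real.exp (-(eps0 c ε)) := Real.exp_pos _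
  unfold eta; linarith

lemma exp_neg_le_one_sub_eta (hc : 0 < c) (hε : 0 < ε) :
    Real.exp (-(eps0 c ε)) ≤ 1 - eta c ε := by
  have h : Real.exp (-(eps0 c ε)) ≤ 1 := by
    rw [Real.exp_le_one_iff]
    simpa using (eps0_pos hc hε).le
  unfold eta; linarith

lemma one_add_eta_le_exp (hc : 0 < c) (hε : 0 < ε) :
    1 + eta c ε ≤ Real.exp (eps0 c ε) := by
  have h1 : eps0 c ε + 1 ≤ Real.exp (eps0 c ε) := Real.add_one_le_exp _
  have h2 : 1 - eps0 c ε ≤ Real.exp (-(eps0 c ε)) := by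
    have := Real.add_one_le_exp (-(eps0 c ε)); linarith
  have h3 : eta c ε ≤ eps0 c ε / 2 := by unfold eta; linarith
  have h4 : eps0 c ε ≤ Real.exp (eps0 c ε) - 1 := by linarith
  have h0 := eps0_pos hc hε
  linarith

variable [Fintype V] [DecidableEq V] {G : SimpleGraph V} {w : Finset V → ℂ}

lemma deg_bound (hc : 0 < c)
    (hcount : ∀ v : V, ∀ k : ℕ, 1 ≤ k →
      (Nat.card {γ : Finset V // IsPolymer G γ ∧ γ.card = k ∧ v ∈ γ} : ℝ) ≤ Real.exp (c * k))
    (x : V) : ((nbr G x).card : ℝ) ≤ Real.exp (c * 2) := by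
  have hinj : (nbr G x).card ≤
      (univ.filter (fun γ : Finset V => IsPolymer G γ ∧ γ.card = 2 ∧ x ∈ γ)).card := by
    apply Finset.card_le_card_of_injOn (fun u => ({x, u} : Finset V))
    · intro u hu
      rw [nbr, Finset.mem_coe, Finset.mem_filter] at hu
      have hadj : G.Adj x u := hu.2
      have hne : x ≠ u := G.ne_of_adj hadj
      rw [Finset.mem_coe, Finset.mem_filter]
      refine ⟨Finset.mem_univ _, ⟨⟨x, by simp⟩, ?_⟩, ?_, by simp⟩
      · have hco : (↑({x, u} : Finset V) : Set V) = {x, u} := by simp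
        rw [hco]
        exact SimpleGraph.induce_pair_connected_of_adj hadj
      · rw [Finset.card_insert_of_notMem (by simpa using hne), Finset.card_singleton]
    · intro u hu u' hu' heq
      simp only [Finset.mem_coe, nbr, Finset.mem_filter] at hu hu'
      have hne : x ≠ u := G.ne_of_adj hu.2
      have hne' : x ≠ u' := G.ne_of_adj hu'.2
      have heq' : ({x, u} : Finset V) = {x, u'} := heq
      have : u ∈ ({x, u'} : Finset V) := heq' ▸ (by simp : u ∈ ({x, u} : Finset V))
      rcases Finset.mem_insert.1 this with h | h
      · exact absurd h.symm hne
      · simpa using h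
  have hcard : ((univ.filter (fun γ : Finset V => IsPolymer G γ ∧ γ.card = 2 ∧ x ∈ γ)).card : ℝ)
      ≤ Real.exp (c * 2) := by
    have := hcount x 2 (by norm_num)
    rw [Nat.card_eq_fintype_card, Fintype.card_subtype] at this
    simpa using this
  calc ((nbr G x).card : ℝ) ≤ _ := by exact_mod_cast hinj
    _ ≤ _ := hcard

lemma nbhd_card_bound (hc : 0 < c)
    (hcount : ∀ v : V, ∀ k : ℕ, 1 ≤ k →
      (Nat.card {γ : Finset V // IsPolymer G γ ∧ γ.card = k ∧ v ∈ γ} : ℝ) ≤ Real.exp (c * k))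
    (γ : Finset V) : ((closedNbhd G γ).card : ℝ) ≤ (1 + Real.exp (c * 2)) * γ.card := by
  have h1 : (closedNbhd G γ).card ≤ ∑ x ∈ γ, (insert x (nbr G x)).card :=
    Finset.card_biUnion_le
  have h2 : ((closedNbhd G γ).card : ℝ) ≤ ∑ x ∈ γ, ((insert x (nbr G x)).card : ℝ) := by
    exact_mod_cast h1
  have h3 : ∀ x ∈ γ, ((insert x (nbr G x)).card : ℝ) ≤ 1 + Real.exp (c * 2) := by
    intro x _
    have h4 : (insert x (nbr G x)).card ≤ (nbr G x).card + 1 := Finset.card_insert_le x _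
    have h5 : ((insert x (nbr G x)).card : ℝ) ≤ ((nbr G x).card : ℝ) + 1 := by exact_mod_cast h4
    linarith [deg_bound hc hcount x]
  calc ((closedNbhd G γ).card : ℝ) ≤ ∑ x ∈ γ, ((insert x (nbr G x)).card : ℝ) := h2
    _ ≤ ∑ _x ∈ γ, (1 + Real.exp (c * 2)) := Finset.sum_le_sum h3
    _ = (1 + Real.exp (c * 2)) * γ.card := by rw [Finset.sum_const, nsmul_eq_mul]; ring

end Analytic

section Main
variable [Fintype V] [DecidableEq V] {G : SimpleGraph V} {w : Finset V → ℂ} {c ε : ℝ}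

lemma sum_bound (hc : 0 < c) (hε : 0 < ε)
    (hcount : ∀ v : V, ∀ k : ℕ, 1 ≤ k →
      (Nat.card {γ : Finset V // IsPolymer G γ ∧ γ.card = k ∧ v ∈ γ} : ℝ) ≤ Real.exp (c * k))
    (hw : ∀ γ : Finset V, IsPolymer G γ →
      ‖w γ‖ ≤ eta c ε * Real.exp (-(2 + c) * γ.card))
    (S : Finset V) (v : V) :
    ∑ γ ∈ (polymersIn G S).filter (fun γ => v ∈ γ),
      ‖w γ‖ * Real.exp (eps0 c ε * (closedNbhd G γ).card) ≤ eta c ε := by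
  set P := (polymersIn G S).filter (fun γ => v ∈ γ) with hP
  have hpoly : ∀ γ ∈ P, IsPolymer G γ ∧ v ∈ γ := by
    intro γ hγ
    rw [hP, Finset.mem_filter, polymersIn, Finset.mem_filter] at hγ
    exact ⟨hγ.1.2, hγ.2⟩
  have hterm : ∀ γ ∈ P, ‖w γ‖ * Real.exp (eps0 c ε * (closedNbhd G γ).card)
      ≤ eta c ε * Real.exp (-(1 + c) * γ.card) := by
    intro γ hγ
    have hpol := (hpoly γ hγ).1
    have h1 := hw γ hpol
    have h2 : Real.exp (eps0 c ε * (closedNbhd G γ).card) ≤ Real.exp ((γ.card : ℝ)) := by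
      apply Real.exp_le_exp.2
      have hN := nbhd_card_bound hc hcount γ
      have he := eps0_mul_le hc hε
      have hpos := (eps0_pos hc hε).le
      calc eps0 c ε * ((closedNbhd G γ).card : ℝ)
          ≤ eps0 c ε * ((1 + Real.exp (c * 2)) * γ.card) := mul_le_mul_of_nonneg_left hN hpos
        _ = (eps0 c ε * (1 + Real.exp (c * 2))) * γ.card := by ring
        _ ≤ 1 * γ.card := mul_le_mul_of_nonneg_right he (Nat.cast_nonneg _)
        _ = γ.card := one_mul _
    calc ‖w γ‖ * Real.exp (eps0 c ε * (closedNbhd G γ).card)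
        ≤ (eta c ε * Real.exp (-(2 + c) * γ.card)) * Real.exp ((γ.card : ℝ)) :=
          mul_le_mul h1 h2 (Real.exp_pos _).le
            (mul_nonneg (eta_pos hc hε).le (Real.exp_pos _).le)
      _ = eta c ε * Real.exp (-(1 + c) * γ.card) := by
          rw [mul_assoc, ← Real.exp_add]
          congr 2
          ring
  have hsum1 : ∑ γ ∈ P, ‖w γ‖ * Real.exp (eps0 c ε * (closedNbhd G γ).card)
      ≤ ∑ γ ∈ P, eta c ε * Real.exp (-(1 + c) * γ.card) := Finset.sum_le_sum hterm
  have hmaps : ∀ γ ∈ P, γ.card ∈ Finset.Icc 1 (Fintype.card V) := by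
    intro γ hγ
    rw [Finset.mem_Icc]
    exact ⟨Finset.card_pos.2 (hpoly γ hγ).1.1, Finset.card_le_univ γ⟩
  have hfib := Finset.sum_fiberwise_of_maps_to hmaps
    (fun γ => eta c ε * Real.exp (-(1 + c) * γ.card))
  rw [← hfib] at hsum1
  have hhalf : Real.exp (-(1:ℝ)) ≤ 1/2 := by
    have h2e : (2:ℝ) ≤ Real.exp 1 := by
      have := Real.add_one_le_exp (1:ℝ); linarith
    rw [Real.exp_neg]
    rw [inv_le_comm₀ (Real.exp_pos _) (by norm_num)]
    linarith
  have hinner : ∀ k ∈ Finset.Icc 1 (Fintype.card V),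
      ∑ γ ∈ P.filter (fun γ => γ.card = k), eta c ε * Real.exp (-(1 + c) * γ.card)
        ≤ eta c ε * (1/2 : ℝ)^k := by
    intro k hk
    rw [Finset.mem_Icc] at hk
    have hconst : ∑ γ ∈ P.filter (fun γ => γ.card = k), eta c ε * Real.exp (-(1 + c) * γ.card)
        = ∑ _γ ∈ P.filter (fun γ => γ.card = k), eta c ε * Real.exp (-(1 + c) * k) :=
      Finset.sum_congr rfl (fun γ hγ => by rw [(Finset.mem_filter.1 hγ).2])
    rw [hconst, Finset.sum_const, nsmul_eq_mul]
    have hcard : (((P.filter (fun γ => γ.card = k)).card : ℕ) : ℝ) ≤ Real.exp (c * k) := by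
      have hsub : P.filter (fun γ => γ.card = k) ⊆
          univ.filter (fun γ : Finset V => IsPolymer G γ ∧ γ.card = k ∧ v ∈ γ) := by
        intro γ hγ
        rw [Finset.mem_filter] at hγ ⊢
        exact ⟨Finset.mem_univ _, (hpoly γ hγ.1).1, hγ.2, (hpoly γ hγ.1).2⟩
      have h := Finset.card_le_card hsub
      have h2 := hcount v k hk.1
      rw [Nat.card_eq_fintype_card, Fintype.card_subtype] at h2
      calc (((P.filter (fun γ => γ.card = k)).card : ℕ) : ℝ)
          ≤ ((univ.filter (fun γ : Finset V => IsPolymer G γ ∧ γ.card = k ∧ v ∈ γ)).card : ℝ) := by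
            exact_mod_cast h
        _ ≤ _ := h2
    have hpos : (0:ℝ) ≤ eta c ε * Real.exp (-(1 + c) * k) :=
      mul_nonneg (eta_pos hc hε).le (Real.exp_pos _).le
    have hek : Real.exp (-(k:ℝ)) ≤ (1/2:ℝ)^k := by
      have : Real.exp (-(k:ℝ)) = (Real.exp (-(1:ℝ)))^k := by
        rw [← Real.exp_nat_mul]
        congr 1
        push_cast
        ring
      rw [this]
      exact pow_le_pow_left₀ (Real.exp_pos _).le hhalf k
    calc ((P.filter (fun γ => γ.card = k)).card : ℝ) * (eta c ε * Real.exp (-(1 + c) * k))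
        ≤ Real.exp (c * k) * (eta c ε * Real.exp (-(1 + c) * k)) :=
          mul_le_mul_of_nonneg_right hcard hpos
      _ = eta c ε * Real.exp (-(k:ℝ)) := by
          rw [mul_comm (Real.exp (c * k)), mul_assoc, ← Real.exp_add]
          congr 2
          ring
      _ ≤ eta c ε * (1/2:ℝ)^k := mul_le_mul_of_nonneg_left hek (eta_pos hc hε).le
  have hgeom : ∑ k ∈ Finset.Icc 1 (Fintype.card V), (1/2:ℝ)^k ≤ 1 := by
    rw [← Finset.Ico_add_one_right_eq_Icc, Finset.sum_Ico_eq_sum_range]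
    have : ∀ i ∈ Finset.range (Fintype.card V + 1 - 1), (1/2:ℝ)^(1+i) = (1/2) * (1/2)^i := by
      intro i _
      rw [pow_add, pow_one]
    rw [Finset.sum_congr rfl this, ← Finset.mul_sum]
    have := sum_geometric_two_le (Fintype.card V + 1 - 1)
    linarith
  calc ∑ γ ∈ P, ‖w γ‖ * Real.exp (eps0 c ε * (closedNbhd G γ).card)
      ≤ ∑ k ∈ Finset.Icc 1 (Fintype.card V),
          ∑ γ ∈ P.filter (fun γ => γ.card = k), eta c ε * Real.exp (-(1 + c) * γ.card) := hsum1
    _ ≤ ∑ k ∈ Finset.Icc 1 (Fintype.card V), eta c ε * (1/2:ℝ)^k := Finset.sum_le_sum hinner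
    _ = eta c ε * ∑ k ∈ Finset.Icc 1 (Fintype.card V), (1/2:ℝ)^k := by rw [Finset.mul_sum]
    _ ≤ eta c ε * 1 := mul_le_mul_of_nonneg_left hgeom (eta_pos hc hε).le
    _ = eta c ε := mul_one _

end Main

section Main2
variable [Fintype V] [DecidableEq V] {G : SimpleGraph V} {w : Finset V → ℂ} {c ε : ℝ}

lemma main_ind (hc : 0 < c) (hε : 0 < ε)
    (hcount : ∀ v : V, ∀ k : ℕ, 1 ≤ k →
      (Nat.card {γ : Finset V // IsPolymer G γ ∧ γ.card = k ∧ v ∈ γ} : ℝ) ≤ Real.exp (c * k))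
    (hw : ∀ γ : Finset V, IsPolymer G γ →
      ‖w γ‖ ≤ eta c ε * Real.exp (-(2 + c) * γ.card)) :
    ∀ n : ℕ, ∀ S : Finset V, S.card ≤ n →
      XiOn G w S ≠ 0 ∧ ∀ v ∈ S,
        ‖XiOn G w S - XiOn G w (S.erase v)‖ ≤
          eta c ε * ‖XiOn G w (S.erase v)‖ := by
  intro n
  induction n with
  | zero =>
      intro S hS
      have hS0 : S = ∅ := Finset.card_eq_zero.1 (Nat.le_zero.1 hS)
      subst hS0
      exact ⟨by rw [XiOn_empty]; exact one_ne_zero,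
        fun v hv => absurd hv (Finset.notMem_empty v)⟩
  | succ n ih =>
      have hrem : ∀ S' : Finset V, S'.card ≤ n → ∀ u : V,
          ‖XiOn G w (S'.erase u)‖ ≤
            Real.exp (eps0 c ε) * ‖XiOn G w S'‖ := by
        intro S' hS' u
        by_cases hu : u ∈ S'
        · obtain ⟨hne0, hcore⟩ := ih S' hS'
          have h1 := hcore u hu
          have tri := abs_le.1
            (abs_norm_sub_norm_le (XiOn G w S') (XiOn G w (S'.erase u)))
          have hexp := exp_neg_le_one_sub_eta hc hε
          have hAe : (0:ℝ) ≤ ‖XiOn G w (S'.erase u)‖ := norm_nonneg _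
          have h2 : (1 - eta c ε) * ‖XiOn G w (S'.erase u)‖ ≤
              ‖XiOn G w S'‖ := by nlinarith [tri.1, tri.2]
          have h3 : Real.exp (-(eps0 c ε)) * ‖XiOn G w (S'.erase u)‖ ≤
              ‖XiOn G w S'‖ :=
            le_trans (mul_le_mul_of_nonneg_right hexp hAe) h2
          calc ‖XiOn G w (S'.erase u)‖
              = Real.exp (eps0 c ε) *
                (Real.exp (-(eps0 c ε)) * ‖XiOn G w (S'.erase u)‖) := by
                rw [← mul_assoc, ← Real.exp_add]; simp
            _ ≤ Real.exp (eps0 c ε) * ‖XiOn G w S'‖ :=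
                mul_le_mul_of_nonneg_left h3 (Real.exp_pos _).le
        · rw [Finset.erase_eq_of_notMem hu]
          nlinarith [Real.one_le_exp (eps0_pos hc hε).le,
            norm_nonneg (XiOn G w S')]
      have hchain : ∀ T S' : Finset V, S'.card ≤ n →
          ‖XiOn G w (S' \ T)‖ ≤
            Real.exp (eps0 c ε * T.card) * ‖XiOn G w S'‖ := by
        intro T
        induction T using Finset.induction_on with
        | empty => intro S' _; simp
        | @insert u T' huT' ihT =>
            intro S' hS'
            rw [Finset.sdiff_insert]
            calc ‖XiOn G w ((S' \ T').erase u)‖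
                ≤ Real.exp (eps0 c ε) * ‖XiOn G w (S' \ T')‖ :=
                  hrem (S' \ T') (le_trans (Finset.card_le_card Finset.sdiff_subset) hS') u
              _ ≤ Real.exp (eps0 c ε) *
                  (Real.exp (eps0 c ε * T'.card) * ‖XiOn G w S'‖) :=
                  mul_le_mul_of_nonneg_left (ihT S' hS') (Real.exp_pos _).le
              _ = Real.exp (eps0 c ε * (insert u T').card) * ‖XiOn G w S'‖ := by
                  rw [Finset.card_insert_of_notMem huT', ← mul_assoc, ← Real.exp_add]
                  congr 2
                  push_cast
                  ring
      intro S hS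
      by_cases hS2 : S.card ≤ n
      · exact ih S hS2
      · have hcard : S.card = n + 1 := le_antisymm hS (not_le.1 hS2)
        have hkey : ∀ v ∈ S, ‖XiOn G w S - XiOn G w (S.erase v)‖ ≤
            eta c ε * ‖XiOn G w (S.erase v)‖ := by
          intro v hv
          have hdiff : XiOn G w S - XiOn G w (S.erase v) =
              ∑ γ ∈ (polymersIn G S).filter (fun γ => v ∈ γ),
                w γ * XiOn G w (S \ closedNbhd G γ) := by
            rw [XiOn_decomp G w hv]; ring
          rw [hdiff]
          have hterm : ∀ γ ∈ (polymersIn G S).filter (fun γ => v ∈ γ),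
              ‖w γ * XiOn G w (S \ closedNbhd G γ)‖ ≤
              (‖w γ‖ * Real.exp (eps0 c ε * (closedNbhd G γ).card)) *
                ‖XiOn G w (S.erase v)‖ := by
            intro γ hγ
            rw [norm_mul]
            have hvN : v ∈ closedNbhd G γ :=
              subset_closedNbhd G γ (Finset.mem_filter.1 hγ).2
            have hid : S \ closedNbhd G γ =
                (S.erase v) \ (closedNbhd G γ ∩ (S.erase v)) := by
              ext x
              simp only [Finset.mem_sdiff, Finset.mem_erase, Finset.mem_inter]
              constructor
              · rintro ⟨hxS, hxN⟩
                exact ⟨⟨fun h => hxN (h ▸ hvN), hxS⟩, fun h => hxN h.1⟩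
              · rintro ⟨⟨hxv, hxS⟩, h⟩
                exact ⟨hxS, fun hN => h ⟨hN, hxv, hxS⟩⟩
            have hcardle : ((closedNbhd G γ ∩ S.erase v).card : ℝ) ≤
                ((closedNbhd G γ).card : ℝ) := by
              exact_mod_cast Finset.card_le_card Finset.inter_subset_left
            have hchain' := hchain (closedNbhd G γ ∩ S.erase v) (S.erase v)
              (by rw [Finset.card_erase_of_mem hv, hcard]; omega)
            rw [← hid] at hchain'
            have hexpmono : Real.exp (eps0 c ε * ((closedNbhd G γ ∩ S.erase v).card : ℝ)) ≤
                Real.exp (eps0 c ε * ((closedNbhd G γ).card : ℝ)) :=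
              Real.exp_le_exp.2 (mul_le_mul_of_nonneg_left hcardle (eps0_pos hc hε).le)
            calc ‖w γ‖ * ‖XiOn G w (S \ closedNbhd G γ)‖
                ≤ ‖w γ‖ *
                  (Real.exp (eps0 c ε * ((closedNbhd G γ ∩ S.erase v).card : ℝ)) *
                    ‖XiOn G w (S.erase v)‖) :=
                  mul_le_mul_of_nonneg_left hchain' (norm_nonneg _)
              _ ≤ ‖w γ‖ *
                  (Real.exp (eps0 c ε * ((closedNbhd G γ).card : ℝ)) *
                    ‖XiOn G w (S.erase v)‖) := by
                  apply mul_le_mul_of_nonneg_left _ (norm_nonneg _)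
                  exact mul_le_mul_of_nonneg_right hexpmono (norm_nonneg _)
              _ = (‖w γ‖ * Real.exp (eps0 c ε * (closedNbhd G γ).card)) *
                  ‖XiOn G w (S.erase v)‖ := by ring
          calc ‖∑ γ ∈ (polymersIn G S).filter (fun γ => v ∈ γ),
                w γ * XiOn G w (S \ closedNbhd G γ)‖
              ≤ ∑ γ ∈ (polymersIn G S).filter (fun γ => v ∈ γ),
                ‖w γ * XiOn G w (S \ closedNbhd G γ)‖ :=
                norm_sum_le _ _
            _ ≤ ∑ γ ∈ (polymersIn G S).filter (fun γ => v ∈ γ),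
                (‖w γ‖ * Real.exp (eps0 c ε * (closedNbhd G γ).card)) *
                  ‖XiOn G w (S.erase v)‖ := Finset.sum_le_sum hterm
            _ = (∑ γ ∈ (polymersIn G S).filter (fun γ => v ∈ γ),
                ‖w γ‖ * Real.exp (eps0 c ε * (closedNbhd G γ).card)) *
                  ‖XiOn G w (S.erase v)‖ := (Finset.sum_mul _ _ _).symm
            _ ≤ eta c ε * ‖XiOn G w (S.erase v)‖ :=
                mul_le_mul_of_nonneg_right (sum_bound hc hε hcount hw S v)
                  (norm_nonneg _)
        refine ⟨?_, hkey⟩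
        have hne : S.Nonempty := Finset.card_pos.1 (by omega)
        obtain ⟨v, hv⟩ := hne
        obtain ⟨hne0, _⟩ := ih (S.erase v)
          (by rw [Finset.card_erase_of_mem hv, hcard]; omega)
        have h1 := hkey v hv
        have tri := abs_le.1
          (abs_norm_sub_norm_le (XiOn G w S) (XiOn G w (S.erase v)))
        have hApos : 0 < ‖XiOn G w (S.erase v)‖ := norm_pos_iff.mpr hne0
        have hetalt := eta_lt_one hc hε
        have hpos : 0 < ‖XiOn G w S‖ := by nlinarith [tri.1, tri.2]
        intro h
        rw [h, norm_zero] at hpos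
        exact lt_irrefl 0 hpos

end Main2

section Final
variable [Fintype V] [DecidableEq V] {G : SimpleGraph V} {w : Finset V → ℂ} {c ε : ℝ}

lemma rem_bounds (hc : 0 < c) (hε : 0 < ε)
    (hcount : ∀ v : V, ∀ k : ℕ, 1 ≤ k →
      (Nat.card {γ : Finset V // IsPolymer G γ ∧ γ.card = k ∧ v ∈ γ} : ℝ) ≤ Real.exp (c * k))
    (hw : ∀ γ : Finset V, IsPolymer G γ →
      ‖w γ‖ ≤ eta c ε * Real.exp (-(2 + c) * γ.card))
    (S : Finset V) (u : V) :
    Real.exp (-(eps0 c ε)) * ‖XiOn G w S‖ ≤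
        ‖XiOn G w (S.erase u)‖ ∧
      ‖XiOn G w (S.erase u)‖ ≤
        Real.exp (eps0 c ε) * ‖XiOn G w S‖ := by
  by_cases hu : u ∈ S
  · obtain ⟨hne0, hcore⟩ := main_ind hc hε hcount hw S.card S le_rfl
    have h1 := hcore u hu
    have tri := abs_le.1
      (abs_norm_sub_norm_le (XiOn G w S) (XiOn G w (S.erase u)))
    have hAe : (0:ℝ) ≤ ‖XiOn G w (S.erase u)‖ := norm_nonneg _
    have hAS : (0:ℝ) ≤ ‖XiOn G w S‖ := norm_nonneg _
    constructor
    · -- lower bound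
      have h2 : ‖XiOn G w S‖ ≤
          (1 + eta c ε) * ‖XiOn G w (S.erase u)‖ := by nlinarith [tri.1, tri.2]
      have h3 : ‖XiOn G w S‖ ≤
          Real.exp (eps0 c ε) * ‖XiOn G w (S.erase u)‖ :=
        le_trans h2 (mul_le_mul_of_nonneg_right (one_add_eta_le_exp hc hε) hAe)
      calc Real.exp (-(eps0 c ε)) * ‖XiOn G w S‖
          ≤ Real.exp (-(eps0 c ε)) *
            (Real.exp (eps0 c ε) * ‖XiOn G w (S.erase u)‖) :=
            mul_le_mul_of_nonneg_left h3 (Real.exp_pos _).le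
        _ = ‖XiOn G w (S.erase u)‖ := by
            rw [← mul_assoc, ← Real.exp_add]; simp
    · -- upper bound
      have hexp := exp_neg_le_one_sub_eta hc hε
      have h2 : (1 - eta c ε) * ‖XiOn G w (S.erase u)‖ ≤
          ‖XiOn G w S‖ := by nlinarith [tri.1, tri.2]
      have h3 : Real.exp (-(eps0 c ε)) * ‖XiOn G w (S.erase u)‖ ≤
          ‖XiOn G w S‖ :=
        le_trans (mul_le_mul_of_nonneg_right hexp hAe) h2
      calc ‖XiOn G w (S.erase u)‖
          = Real.exp (eps0 c ε) *
            (Real.exp (-(eps0 c ε)) * ‖XiOn G w (S.erase u)‖) := by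
            rw [← mul_assoc, ← Real.exp_add]; simp
        _ ≤ Real.exp (eps0 c ε) * ‖XiOn G w S‖ :=
            mul_le_mul_of_nonneg_left h3 (Real.exp_pos _).le
  · rw [Finset.erase_eq_of_notMem hu]
    have hA : (0:ℝ) ≤ ‖XiOn G w S‖ := norm_nonneg _
    have h1 : Real.exp (-(eps0 c ε)) ≤ 1 := by
      rw [Real.exp_le_one_iff]; simpa using (eps0_pos hc hε).le
    have h2 : (1:ℝ) ≤ Real.exp (eps0 c ε) := Real.one_le_exp (eps0_pos hc hε).le
    constructor <;> nlinarith

lemma chain_final (hc : 0 < c) (hε : 0 < ε)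
    (hcount : ∀ v : V, ∀ k : ℕ, 1 ≤ k →
      (Nat.card {γ : Finset V // IsPolymer G γ ∧ γ.card = k ∧ v ∈ γ} : ℝ) ≤ Real.exp (c * k))
    (hw : ∀ γ : Finset V, IsPolymer G γ →
      ‖w γ‖ ≤ eta c ε * Real.exp (-(2 + c) * γ.card)) :
    ∀ (T S : Finset V),
      Real.exp (-(eps0 c ε * T.card)) * ‖XiOn G w S‖ ≤
          ‖XiOn G w (S \ T)‖ ∧
        ‖XiOn G w (S \ T)‖ ≤
          Real.exp (eps0 c ε * T.card) * ‖XiOn G w S‖ := by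
  intro T
  induction T using Finset.induction_on with
  | empty => intro S; simp
  | @insert u T' huT' ihT =>
      intro S
      rw [Finset.sdiff_insert, Finset.card_insert_of_notMem huT']
      obtain ⟨hl1, hu1⟩ := rem_bounds hc hε hcount hw (S \ T') u
      obtain ⟨hl2, hu2⟩ := ihT S
      have hsplit : Real.exp (eps0 c ε * ((T'.card + 1 : ℕ) : ℝ)) =
          Real.exp (eps0 c ε) * Real.exp (eps0 c ε * T'.card) := by
        rw [← Real.exp_add]; congr 1; push_cast; ring
      have hsplit' : Real.exp (-(eps0 c ε * ((T'.card + 1 : ℕ) : ℝ))) =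
          Real.exp (-(eps0 c ε)) * Real.exp (-(eps0 c ε * T'.card)) := by
        rw [← Real.exp_add]; congr 1; push_cast; ring
      constructor
      · calc Real.exp (-(eps0 c ε * ((T'.card + 1 : ℕ) : ℝ))) * ‖XiOn G w S‖
            = Real.exp (-(eps0 c ε)) *
              (Real.exp (-(eps0 c ε * T'.card)) * ‖XiOn G w S‖) := by
              rw [hsplit']; ring
          _ ≤ Real.exp (-(eps0 c ε)) * ‖XiOn G w (S \ T')‖ :=
              mul_le_mul_of_nonneg_left hl2 (Real.exp_pos _).le
          _ ≤ ‖XiOn G w ((S \ T').erase u)‖ := hl1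
      · calc ‖XiOn G w ((S \ T').erase u)‖
            ≤ Real.exp (eps0 c ε) * ‖XiOn G w (S \ T')‖ := hu1
          _ ≤ Real.exp (eps0 c ε) *
              (Real.exp (eps0 c ε * T'.card) * ‖XiOn G w S‖) :=
              mul_le_mul_of_nonneg_left hu2 (Real.exp_pos _).le
          _ = Real.exp (eps0 c ε * ((T'.card + 1 : ℕ) : ℝ)) * ‖XiOn G w S‖ := by
              rw [hsplit]; ring

end Final

/-- cluster-expansion control of ratios of polymer partition functions.
For every `c > 0` and `ε > 0` there is `η > 0`, depending only on `ε` and `c`, such that: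
for any finite graph `G` whose number of connected subsets of cardinality `k` containing a
fixed vertex is at most `e^{ck}`, and any activity function `w` with
`|w(γ)| ≤ η e^{-(2+c)|γ|}` on polymers, one has `Ξ(w) ≠ 0` and, for every independent
family `{γ̄}`, `e^{-ε|Tr({γ̄})|} ≤ |Ξ(w^{{γ̄}})/Ξ(w)| ≤ e^{ε|Tr({γ̄})|}`. -/
theorem stmt_11 (c : ℝ) (hc : 0 < c) (ε : ℝ) (hε : 0 < ε) :
    ∃ η : ℝ, 0 < η ∧
      ∀ (V : Type) [Fintype V] [DecidableEq V] (G : SimpleGraph V),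
        (∀ v : V, ∀ k : ℕ, 1 ≤ k →
          (Nat.card {γ : Finset V // IsPolymer G γ ∧ γ.card = k ∧ v ∈ γ} : ℝ) ≤
            Real.exp (c * k)) →
        ∀ w : Finset V → ℂ,
          (∀ γ : Finset V, IsPolymer G γ →
            ‖w γ‖ ≤ η * Real.exp (-(2 + c) * γ.card)) →
          Xi G w ≠ 0 ∧
            ∀ Γ : Finset (Finset V), IsIndepFamily G Γ →
              Real.exp (-ε * (traceFam Γ).card) ≤
                  ‖Xi G (fun γ => if γ ∩ traceFam Γ = ∅ then w γ else 0) /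
                    Xi G w‖ ∧
                ‖Xi G (fun γ => if γ ∩ traceFam Γ = ∅ then w γ else 0) /
                    Xi G w‖ ≤
                  Real.exp (ε * (traceFam Γ).card) := by
  refine ⟨eta c ε, eta_pos hc hε, ?_⟩
  intro V _ _ G hcount w hw
  have hXi : Xi G w = XiOn G w univ := Xi_eq_XiOn_univ G w
  have hXine : Xi G w ≠ 0 := by
    rw [hXi]
    exact (main_ind hc hε hcount hw (univ : Finset V).card univ le_rfl).1
  refine ⟨hXine, ?_⟩
  intro Γ _
  set T := traceFam Γ with hT
  have htr : Xi G (fun γ => if γ ∩ T = ∅ then w γ else 0) = XiOn G w (univ \ T) :=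
    Xi_trunc_eq_XiOn G w T
  have hApos : 0 < ‖XiOn G w univ‖ := by
    apply norm_pos_iff.mpr
    rw [← hXi]; exact hXine
  obtain ⟨hl, hu⟩ := chain_final hc hε hcount hw T univ
  have hdiv : ‖Xi G (fun γ => if γ ∩ T = ∅ then w γ else 0) / Xi G w‖ =
      ‖XiOn G w (univ \ T)‖ / ‖XiOn G w univ‖ := by
    rw [norm_div, htr, hXi]
  rw [hdiv]
  have hTnn : (0:ℝ) ≤ (T.card : ℝ) := Nat.cast_nonneg _
  have he1 : Real.exp (-ε * (T.card : ℝ)) ≤ Real.exp (-(eps0 c ε * T.card)) := by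
    apply Real.exp_le_exp.2
    have := mul_le_mul_of_nonneg_right (eps0_le_eps (c := c) (ε := ε)) hTnn
    linarith
  have he2 : Real.exp (eps0 c ε * T.card) ≤ Real.exp (ε * (T.card : ℝ)) := by
    apply Real.exp_le_exp.2
    exact mul_le_mul_of_nonneg_right (eps0_le_eps (c := c) (ε := ε)) hTnn
  constructor
  · rw [le_div_iff₀ hApos]
    calc Real.exp (-ε * (T.card : ℝ)) * ‖XiOn G w univ‖
        ≤ Real.exp (-(eps0 c ε * T.card)) * ‖XiOn G w univ‖ :=
          mul_le_mul_of_nonneg_right he1 hApos.le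
      _ ≤ ‖XiOn G w (univ \ T)‖ := hl
  · rw [div_le_iff₀ hApos]
    calc ‖XiOn G w (univ \ T)‖
        ≤ Real.exp (eps0 c ε * T.card) * ‖XiOn G w univ‖ := hu
      _ ≤ Real.exp (ε * (T.card : ℝ)) * ‖XiOn G w univ‖ :=
          mul_le_mul_of_nonneg_right he2 hApos.le
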